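/- arXiv:2005.07789 — 3 statements merged into one kernel-verified Lean document; each statement's English description precedes it below -/
import Mathlib

section
/- Suppose (b_n) is a positive sequence, A ∈ 𝓔 with μ(A) ∈ (0,∞), and for all bounded μ-a.e. continuous g supported in A, b_n T̂^n g → μ(g) uniformly a.e. on A. Then for any B₁, B₂ ⊂ A with μ(∂B₁) = μ(∂B₂) = 0, μ(B₁ ∩ T^{-n} B₂) ~ b_n^{-1} μ(B₁) μ(B₂) as n → ∞, i.e., lim_n b_n μ(B₁ ∩ T^{-n} B₂) = μ(B₁) μ(B₂). -/
open MeasureTheory Set Topology Filter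

/-- Iterated duality: `∫ f · (h ∘ Tⁿ) = ∫ (T̂ⁿ f) · h`. -/
lemma stmt4_dual_iter {E : Type*} [MeasurableSpace E] (μ : Measure E)
    (T : E → E) (hT : Measurable T) (Tdual : (E → ℝ) → (E → ℝ))
    (hdmeas : ∀ f : E → ℝ, Measurable f → Measurable (Tdual f))
    (hdint : ∀ f : E → ℝ, Integrable f μ → Integrable (Tdual f) μ)
    (hdual : ∀ f : E → ℝ, Integrable f μ →
      ∀ g : E → ℝ, Measurable g → (∃ C : ℝ, ∀ x, |g x| ≤ C) →
      ∫ x, f x * g (T x) ∂μ = ∫ x, Tdual f x * g x ∂μ) :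
    ∀ n (h : E → ℝ), Measurable h → (∃ C : ℝ, ∀ x, |h x| ≤ C) →
      ∀ f : E → ℝ, Integrable f μ →
      ∫ x, f x * h (T^[n] x) ∂μ = ∫ x, Tdual^[n] f x * h x ∂μ := by
  intro n
  induction n with
  | zero => intro h _ _ f _; simp
  | succ n ih =>
    intro h hh hhb f hf
    have hstep : ∫ x, f x * (fun y => h (T^[n] y)) (T x) ∂μ
        = ∫ x, Tdual f x * (fun y => h (T^[n] y)) x ∂μ := by
      refine hdual f hf (fun y => h (T^[n] y)) (hh.comp (hT.iterate n)) ?_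
      obtain ⟨C, hC⟩ := hhb; exact ⟨C, fun x => hC _⟩
    have h1 : ∫ x, f x * h (T^[n+1] x) ∂μ = ∫ x, Tdual f x * h (T^[n] x) ∂μ := by
      simpa [Function.iterate_succ_apply] using hstep
    rw [h1, ih h hh hhb (Tdual f) (hdint f hf), Function.iterate_succ_apply]

/-- Under the uniform-return assumption `b_n T̂ⁿ g → μ(g)` uniformly a.e. on `A`
(for bounded μ-a.e. continuous `g` supported in `A`), one has the mixing relation
`lim_n b_n μ(B₁ ∩ T^{-n}B₂) = μ(B₁) μ(B₂)` for all `B₁, B₂ ⊆ A` whose boundaries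
(relative to `A`) are μ-null. -/
theorem stmt4 {E : Type*} [MeasurableSpace E] [TopologicalSpace E]
    (μ : Measure E) [SigmaFinite μ] (hEinf : μ Set.univ = ⊤)
    (T : E → E) (hT : Measurable T)
    (hTpres : ∀ B : Set E, MeasurableSet B → μ (T ⁻¹' B) = μ B)
    (Tdual : (E → ℝ) → (E → ℝ))
    (hdmeas : ∀ f : E → ℝ, Measurable f → Measurable (Tdual f))
    (hdint : ∀ f : E → ℝ, Integrable f μ → Integrable (Tdual f) μ)
    (hdual : ∀ f : E → ℝ, Integrable f μ →
      ∀ g : E → ℝ, Measurable g → (∃ C : ℝ, ∀ x, |g x| ≤ C) →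
      ∫ x, f x * g (T x) ∂μ = ∫ x, Tdual f x * g x ∂μ)
    (A : Set E) (hA : MeasurableSet A) (hA0 : 0 < μ A) (hAfin : μ A < ⊤)
    (b : ℕ → ℝ) (hb : ∀ n, 0 < b n)
    (hunif : ∀ g : E → ℝ, Measurable g → (∃ C : ℝ, ∀ x, |g x| ≤ C) →
      Function.support g ⊆ A →
      μ {x ∈ A | ¬ ContinuousWithinAt g A x} = 0 →
      ∃ Nnull : Set E, μ Nnull = 0 ∧
        TendstoUniformlyOn (fun n x => b n * (Tdual^[n] g) x)
          (fun _ => ∫ x, g x ∂μ) atTop (A \ Nnull)) :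
    ∀ B₁ B₂ : Set E, MeasurableSet B₁ → MeasurableSet B₂ → B₁ ⊆ A → B₂ ⊆ A →
      μ (A ∩ closure B₁ ∩ closure (A \ B₁)) = 0 →
      μ (A ∩ closure B₂ ∩ closure (A \ B₂)) = 0 →
      Tendsto (fun n => b n * (μ (B₁ ∩ T^[n] ⁻¹' B₂)).toReal) atTop
        (𝓝 ((μ B₁).toReal * (μ B₂).toReal)) := by
  intro B₁ B₂ hB₁ hB₂ hB₁A hB₂A hbd1 _hbd2
  set g : E → ℝ := B₁.indicator 1 with hg_def
  have hB₁fin : μ B₁ < ⊤ := lt_of_le_of_lt (measure_mono hB₁A) hAfin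
  have hB₂fin : μ B₂ < ⊤ := lt_of_le_of_lt (measure_mono hB₂A) hAfin
  have hgmeas : Measurable g := measurable_one.indicator hB₁
  have hgbdd : ∃ C : ℝ, ∀ x, |g x| ≤ C := by
    refine ⟨1, fun x => ?_⟩
    by_cases hx : x ∈ B₁ <;> simp [hg_def, indicator_apply, hx]
  have hgsupp : Function.support g ⊆ A :=
    Set.support_indicator_subset.trans hB₁A
  have hgint : Integrable g μ := by
    rw [hg_def, integrable_indicator_iff hB₁]
    exact integrableOn_const hB₁fin.ne
  -- a.e. continuity
  have hgcont : μ {x ∈ A | ¬ ContinuousWithinAt g A x} = 0 := by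
    refine measure_mono_null ?_ hbd1
    intro x hx
    rcases hx with ⟨hxA, hxnc⟩
    refine ⟨⟨hxA, ?_⟩, ?_⟩
    all_goals
      by_contra hcl
    · -- x ∉ closure B₁ : g = 0 near x, contradiction with hxnc
      apply hxnc
      have hxB : x ∉ B₁ := fun h => hcl (subset_closure h)
      have hev : g =ᶠ[𝓝[A] x] fun _ => g x := by
        have hmem : (closure B₁)ᶜ ∈ 𝓝[A] x :=
          mem_nhdsWithin_of_mem_nhds (isClosed_closure.isOpen_compl.mem_nhds hcl)
        filter_upwards [hmem] with y hy
        have : y ∉ B₁ := fun h => hy (subset_closure h)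
        simp [hg_def, indicator_apply, this, hxB]
      exact Tendsto.congr' hev.symm tendsto_const_nhds
    · -- x ∉ closure (A \ B₁) : g = 1 near x within A
      apply hxnc
      have hxB : x ∈ B₁ := by
        by_contra hxB
        exact hcl (subset_closure ⟨hxA, hxB⟩)
      have hev : g =ᶠ[𝓝[A] x] fun _ => g x := by
        have hmem : (closure (A \ B₁))ᶜ ∈ 𝓝[A] x :=
          mem_nhdsWithin_of_mem_nhds (isClosed_closure.isOpen_compl.mem_nhds hcl)
        filter_upwards [hmem, self_mem_nhdsWithin] with y hy hyA
        have : y ∈ B₁ := by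
          by_contra hyB
          exact hy (subset_closure ⟨hyA, hyB⟩)
        simp [hg_def, indicator_apply, this, hxB]
      exact Tendsto.congr' hev.symm tendsto_const_nhds
  obtain ⟨Nnull, hNnull, hconv⟩ := hunif g hgmeas hgbdd hgsupp hgcont
  have hgint_val : ∫ x, g x ∂μ = (μ B₁).toReal := integral_indicator_one hB₁
  -- integrability/measurability of the iterates
  have hiter : ∀ n, Integrable (Tdual^[n] g) μ := by
    intro n
    induction n with
    | zero => simpa using hgint
    | succ n ih => rw [Function.iterate_succ_apply']; exact hdint _ ih
  -- key identity
  set h : E → ℝ := B₂.indicator 1 with hh_def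
  have hhmeas : Measurable h := measurable_one.indicator hB₂
  have hhbdd : ∃ C : ℝ, ∀ x, |h x| ≤ C := by
    refine ⟨1, fun x => ?_⟩
    by_cases hx : x ∈ B₂ <;> simp [hh_def, indicator_apply, hx]
  have hkey : ∀ n, (μ (B₁ ∩ T^[n] ⁻¹' B₂)).toReal = ∫ x in B₂, Tdual^[n] g x ∂μ := by
    intro n
    have hmeasset : MeasurableSet (B₁ ∩ T^[n] ⁻¹' B₂) :=
      hB₁.inter ((hT.iterate n) hB₂)
    have h1 : ∫ x, g x * h (T^[n] x) ∂μ = ∫ x, Tdual^[n] g x * h x ∂μ :=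
      stmt4_dual_iter μ T hT Tdual hdmeas hdint hdual n h hhmeas hhbdd g hgint
    have h2 : (fun x => g x * h (T^[n] x)) = (B₁ ∩ T^[n] ⁻¹' B₂).indicator 1 := by
      funext x
      by_cases h1x : x ∈ B₁ <;> by_cases h2x : T^[n] x ∈ B₂ <;>
        simp [hg_def, hh_def, indicator_apply, h1x, h2x, Set.mem_inter_iff]
    have h3 : (fun x => Tdual^[n] g x * h x) = B₂.indicator (fun x => Tdual^[n] g x) := by
      funext x
      by_cases hx : x ∈ B₂ <;> simp [hh_def, indicator_apply, hx]
    calc (μ (B₁ ∩ T^[n] ⁻¹' B₂)).toReal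
        = ∫ x, (B₁ ∩ T^[n] ⁻¹' B₂).indicator 1 x ∂μ := (integral_indicator_one hmeasset).symm
      _ = ∫ x, g x * h (T^[n] x) ∂μ := by rw [h2]
      _ = ∫ x, Tdual^[n] g x * h x ∂μ := h1
      _ = ∫ x, B₂.indicator (fun x => Tdual^[n] g x) x ∂μ := by rw [h3]
      _ = ∫ x in B₂, Tdual^[n] g x ∂μ := integral_indicator hB₂
  -- the set on which we integrate
  set S : Set E := B₂ \ Nnull with hS_def
  have hSsub : S ⊆ A \ Nnull := fun x hx => ⟨hB₂A hx.1, hx.2⟩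
  have hSeq : B₂ =ᵐ[μ] S :=
    (MeasureTheory.diff_ae_eq_self.2 (measure_mono_null inter_subset_right hNnull)).symm
  have hSmeasure : μ S = μ B₂ := (measure_congr hSeq).symm
  have hSfin : μ S < ⊤ := hSmeasure ▸ hB₂fin
  have hkey2 : ∀ n, b n * (μ (B₁ ∩ T^[n] ⁻¹' B₂)).toReal
      = ∫ x in S, b n * Tdual^[n] g x ∂μ := by
    intro n
    rw [hkey n, setIntegral_congr_set hSeq]
    exact (integral_const_mul _ _).symm
  have hlim : Tendsto (fun n => ∫ x in S, b n * Tdual^[n] g x ∂μ) atTop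
      (𝓝 ((μ B₁).toReal * (μ B₂).toReal)) := by
    rw [Metric.tendsto_atTop]
    intro ε hε
    have hεS : 0 < ε / ((μ B₂).toReal + 1) := by positivity
    rw [Metric.tendstoUniformlyOn_iff] at hconv
    obtain ⟨N, hN⟩ := (hconv _ hεS).exists_forall_of_atTop
    refine ⟨N, fun n hn => ?_⟩
    have hbound : ∀ x ∈ S, ‖b n * Tdual^[n] g x - (μ B₁).toReal‖ ≤ ε / ((μ B₂).toReal + 1) := by
      intro x hx
      have := hN n hn x (hSsub hx)
      rw [hgint_val] at this
      rw [Real.norm_eq_abs, abs_sub_comm]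
      exact le_of_lt (by simpa [Real.dist_eq] using this)
    have hintS : IntegrableOn (fun x => b n * Tdual^[n] g x) S μ :=
      ((hiter n).const_mul (b n)).integrableOn
    have hconstint : IntegrableOn (fun _ => (μ B₁).toReal) S μ :=
      integrableOn_const hSfin.ne
    have hsplit : ∫ x in S, b n * Tdual^[n] g x ∂μ - (μ B₁).toReal * (μ B₂).toReal
        = ∫ x in S, (b n * Tdual^[n] g x - (μ B₁).toReal) ∂μ := by
      rw [integral_sub hintS hconstint]
      have : ∫ _ in S, (μ B₁).toReal ∂μ = (μ B₁).toReal * (μ B₂).toReal := by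
        rw [setIntegral_const, measureReal_def, hSmeasure, smul_eq_mul, mul_comm]
      rw [this]
    have hest : ‖∫ x in S, (b n * Tdual^[n] g x - (μ B₁).toReal) ∂μ‖
        ≤ (ε / ((μ B₂).toReal + 1)) * (μ S).toReal :=
      norm_setIntegral_le_of_norm_le_const hSfin hbound
    rw [Real.dist_eq, ← Real.norm_eq_abs, hsplit]
    calc ‖∫ x in S, (b n * Tdual^[n] g x - (μ B₁).toReal) ∂μ‖
        ≤ (ε / ((μ B₂).toReal + 1)) * (μ S).toReal := hest
      _ < ε := by
          rw [hSmeasure]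
          rw [div_mul_eq_mul_div, div_lt_iff₀ (by positivity)]
          have h1 : (μ B₂).toReal < (μ B₂).toReal + 1 := by linarith
          calc ε * (μ B₂).toReal ≤ ε * ((μ B₂).toReal + 1) - ε * 1 := by ring_nf; nlinarith [ENNReal.toReal_nonneg (a := μ B₂)]
            _ < ε * ((μ B₂).toReal + 1) := by linarith
  exact hlim.congr (fun n => (hkey2 n).symm)
end

section
/- Under Assumption 1 (uniform return with rate b_n ∈ RV_∞(1-β), β ∈ (0,1)), for every q ≥ 2 and every b ∈ (β-1, 0), there exists c > 0, independent of k₁,...,k_q, such that μ(⋂_{j=1}^q T^{-k_j} A) ≤ c (k₂-k₁)₁^b (k₃-k₂)₁^b ⋯ (k_q-k_{q-1})₁^b for all 1 ≤ k₁ ≤ ⋯ ≤ k_q, where (x)₁^b := (x ∨ 1)^b. -/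
open MeasureTheory Set Topology Filter

private theorem stmt6_potter (β b : ℝ) (hb1 : β - 1 < b) (hb2 : b < 0)
    (bseq : ℕ → ℝ) (hbpos : ∀ n, 0 < bseq n)
    (hrv : ∀ lam : ℝ, 0 < lam →
      Tendsto (fun n : ℕ => bseq ⌊lam * (n : ℝ)⌋₊ / bseq n) atTop (nhds (lam ^ (1 - β)))) :
    ∃ c₂ : ℝ, 0 < c₂ ∧ ∀ n : ℕ, 1 ≤ n → 1 / bseq n ≤ c₂ * (n : ℝ) ^ b := by
  have hlim := hrv (1/2) (by norm_num)
  have hval : ((1:ℝ)/2) ^ (1-β) = (2:ℝ) ^ (β-1) := by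
    rw [one_div, Real.inv_rpow (by norm_num : (0:ℝ) ≤ 2),
      ← Real.rpow_neg (by norm_num : (0:ℝ) ≤ 2)]
    congr 1; ring
  rw [hval] at hlim
  have hlt : (2:ℝ) ^ (β-1) < 2 ^ b :=
    (Real.rpow_lt_rpow_left_iff one_lt_two).mpr (by linarith)
  have hev : ∀ᶠ n : ℕ in atTop, bseq (⌊(1/2 : ℝ) * (n:ℝ)⌋₊) / bseq n < 2 ^ b :=
    hlim.eventually_lt_const hlt
  have hfloor : ∀ n : ℕ, ⌊(1/2 : ℝ) * (n:ℝ)⌋₊ = n / 2 := by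
    intro n
    rw [show (1/2 : ℝ) * (n:ℝ) = (n:ℝ)/((2:ℕ):ℝ) by push_cast; ring,
      Nat.floor_div_natCast, Nat.floor_natCast]
  obtain ⟨N₁, hN₁⟩ := eventually_atTop.mp hev
  set N₂ := max N₁ 2 with hN₂def
  have hstep : ∀ n, 2*N₂ < n → (2:ℝ)^(-b) * bseq (n/2) ≤ bseq n := by
    intro n hn
    have h1 : bseq (n/2) / bseq n < 2^b := by
      have := hN₁ n (by omega)
      rwa [hfloor n] at this
    have h2 : bseq (n/2) < 2^b * bseq n := by
      rw [div_lt_iff₀ (hbpos n)] at h1; linarith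
    have h3 : (2:ℝ)^(-b) * bseq (n/2) ≤ (2:ℝ)^(-b) * ((2:ℝ)^b * bseq n) :=
      mul_le_mul_of_nonneg_left h2.le (Real.rpow_nonneg (by norm_num) _)
    have h4 : (2:ℝ)^(-b) * (2:ℝ)^b = 1 := by
      rw [← Real.rpow_add two_pos]; simp
    calc (2:ℝ)^(-b) * bseq (n/2) ≤ (2:ℝ)^(-b) * ((2:ℝ)^b * bseq n) := h3
    _ = ((2:ℝ)^(-b) * (2:ℝ)^b) * bseq n := by ring
    _ = bseq n := by rw [h4, one_mul]
  have hne : (Finset.Icc 1 (2*N₂)).Nonempty := ⟨1, by simp; omega⟩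
  set c₁ := (Finset.Icc 1 (2*N₂)).inf' hne (fun n => bseq n * ((n:ℝ)+1) ^ b) with hc₁def
  have hc₁pos : 0 < c₁ := by
    rw [hc₁def, Finset.lt_inf'_iff]
    intro n _
    exact mul_pos (hbpos n) (Real.rpow_pos_of_pos (by positivity) b)
  have hQ : ∀ n, 1 ≤ n → c₁ ≤ bseq n * ((n:ℝ)+1) ^ b := by
    intro n
    induction n using Nat.strong_induction_on with
    | _ n ih =>
      intro hn1
      by_cases hn : n ≤ 2*N₂
      · exact Finset.inf'_le _ (Finset.mem_Icc.mpr ⟨hn1, hn⟩)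
      · push_neg at hn
        have hhalf1 : 1 ≤ n/2 := by omega
        have ihh := ih (n/2) (by omega) hhalf1
        have hstepn := hstep n hn
        have hkey : ((2:ℝ) * (((n/2 : ℕ):ℝ)+1)) ^ b ≤ ((n:ℝ)+1) ^ b := by
          apply Real.rpow_le_rpow_of_nonpos (by positivity) ?_ hb2.le
          have h2 : n ≤ 2*(n/2) + 1 := by omega
          have h3 : (n:ℝ) ≤ 2*((n/2:ℕ):ℝ) + 1 := by exact_mod_cast h2
          linarith
        have hmul : ((2:ℝ) * (((n/2:ℕ):ℝ)+1)) ^ b = (2:ℝ)^b * (((n/2:ℕ):ℝ)+1)^b :=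
          Real.mul_rpow (by norm_num) (by positivity)
        have h4 : (2:ℝ)^(-b) * (2:ℝ)^b = 1 := by
          rw [← Real.rpow_add two_pos]; simp
        calc c₁ ≤ bseq (n/2) * (((n/2:ℕ):ℝ)+1)^b := ihh
        _ = ((2:ℝ)^(-b) * bseq (n/2)) * ((2:ℝ)^b * (((n/2:ℕ):ℝ)+1)^b) := by
            rw [show ((2:ℝ)^(-b) * bseq (n/2)) * ((2:ℝ)^b * (((n/2:ℕ):ℝ)+1)^b)
              = ((2:ℝ)^(-b) * (2:ℝ)^b) * (bseq (n/2) * (((n/2:ℕ):ℝ)+1)^b) by ring, h4, one_mul]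
        _ = ((2:ℝ)^(-b) * bseq (n/2)) * (((2:ℝ) * (((n/2:ℕ):ℝ)+1)) ^ b) := by rw [hmul]
        _ ≤ bseq n * ((n:ℝ)+1)^b := by
            apply mul_le_mul hstepn hkey (Real.rpow_nonneg (by positivity) b) (hbpos n).le
  refine ⟨1/c₁, by positivity, fun n hn => ?_⟩
  have hnp : (0:ℝ) < (n:ℝ) := by exact_mod_cast hn
  have h2 : ((n:ℝ)+1)^b ≤ (n:ℝ)^b :=
    Real.rpow_le_rpow_of_nonpos hnp (by linarith) hb2.le
  have h3 : c₁ ≤ bseq n * (n:ℝ)^b :=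
    le_trans (hQ n hn) (mul_le_mul_of_nonneg_left h2 (hbpos n).le)
  rw [div_le_iff₀ (hbpos n)]
  calc (1:ℝ) = c₁ * (1/c₁) := by field_simp
  _ ≤ (bseq n * (n:ℝ)^b) * (1/c₁) := by
      apply mul_le_mul_of_nonneg_right h3 (by positivity)
  _ = 1 / c₁ * (n:ℝ) ^ b * bseq n := by ring

private theorem stmt6_pres_iter {E : Type*} [MeasurableSpace E] (μ : Measure E)
    (T : E → E) (hT : Measurable T)
    (hTpres : ∀ B : Set E, MeasurableSet B → μ (T ⁻¹' B) = μ B) :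
    ∀ (n : ℕ) (S : Set E), MeasurableSet S → μ ((T^[n]) ⁻¹' S) = μ S := by
  intro n
  induction n with
  | zero => intro S hS; simp
  | succ n ih =>
    intro S hS
    rw [Function.iterate_succ, Set.preimage_comp, hTpres _ ((hT.iterate n) hS)]
    exact ih S hS

private theorem stmt6_dual_iter {E : Type*} [MeasurableSpace E] (μ : Measure E)
    (T : E → E) (hT : Measurable T)
    (Tdual : (E → ℝ) → (E → ℝ))
    (hdint : ∀ f : E → ℝ, Integrable f μ → Integrable (Tdual f) μ)
    (hdual : ∀ f : E → ℝ, Integrable f μ →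
      ∀ g : E → ℝ, Measurable g → (∃ C : ℝ, ∀ x, |g x| ≤ C) →
      ∫ x, f x * g (T x) ∂μ = ∫ x, Tdual f x * g x ∂μ) :
    ∀ (n : ℕ) (f : E → ℝ), Integrable f μ →
    ∀ (h : E → ℝ), Measurable h → (∃ C, ∀ x, |h x| ≤ C) →
    ∫ x, f x * h (T^[n] x) ∂μ = ∫ x, (Tdual^[n] f) x * h x ∂μ := by
  intro n
  induction n with
  | zero => intro f hf h hh hhb; simp
  | succ n ih =>
    intro f hf h hh hhb
    obtain ⟨Ch, hCh⟩ := hhb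
    have h1 : ∫ x, f x * h (T^[n+1] x) ∂μ = ∫ x, (Tdual f) x * h (T^[n] x) ∂μ := by
      have := hdual f hf (fun y => h (T^[n] y)) (hh.comp (hT.iterate n)) ⟨Ch, fun x => hCh _⟩
      simpa [Function.iterate_succ_apply] using this
    rw [h1, ih (Tdual f) (hdint f hf) h hh ⟨Ch, hCh⟩, Function.iterate_succ_apply]

private theorem stmt6_core {E : Type*} [MeasurableSpace E] (μ : Measure E)
    (T : E → E) (hT : Measurable T)
    (Tdual : (E → ℝ) → (E → ℝ))
    (A : Set E) (hA : MeasurableSet A) (hAfin : μ A < ⊤)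
    (b : ℝ) (hb2 : b < 0)
    (bseq : ℕ → ℝ) (hbpos : ∀ n, 0 < bseq n)
    (g : E → ℝ) (hg_def : g = A.indicator (fun _ => (1:ℝ)))
    (hg_int : Integrable g μ)
    (hit_int : ∀ n, Integrable (Tdual^[n] g) μ)
    (N : Set E) (hNnull : μ N = 0)
    (M : ℝ) (hM : 0 < M)
    (n₀ : ℕ) (hn₀ : ∀ n, n₀ ≤ n → ∀ x ∈ A \ N, bseq n * (Tdual^[n] g) x ≤ M)
    (c₂ : ℝ) (hc₂ : ∀ n : ℕ, 1 ≤ n → 1 / bseq n ≤ c₂ * (n : ℝ) ^ b)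
    (hpres_iter : ∀ (n : ℕ) (S : Set E), MeasurableSet S → μ ((T^[n]) ⁻¹' S) = μ S)
    (hdual_iter : ∀ (n : ℕ) (f : E → ℝ), Integrable f μ →
      ∀ (h : E → ℝ), Measurable h → (∃ C, ∀ x, |h x| ≤ C) →
      ∫ x, f x * h (T^[n] x) ∂μ = ∫ x, (Tdual^[n] f) x * h x ∂μ) :
    ∃ C : ℝ, 1 ≤ C ∧ ∀ (n : ℕ) (S : Set E), MeasurableSet S → S ⊆ A →
      (μ (A ∩ (T^[n]) ⁻¹' S)).toReal ≤ C * (max (n:ℝ) 1) ^ b * (μ S).toReal := by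
  set n₀' := max n₀ 1 with hn₀'def
  have hn₀'1 : 1 ≤ n₀' := le_max_right _ _
  have hn₀'pos : (0:ℝ) < (n₀' : ℝ) := by exact_mod_cast hn₀'1
  refine ⟨max (max 1 ((n₀' : ℝ) ^ (-b))) (M * c₂), le_trans (le_max_left _ _) (le_max_left _ _),
    fun n S hS hSA => ?_⟩
  set C := max (max 1 ((n₀' : ℝ) ^ (-b))) (M * c₂) with hCdef
  have hC1 : (1:ℝ) ≤ C := le_trans (le_max_left _ _) (le_max_left _ _)
  have hSfin : μ S < ⊤ := lt_of_le_of_lt (measure_mono hSA) hAfin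
  have htriv : (μ (A ∩ (T^[n]) ⁻¹' S)).toReal ≤ (μ S).toReal := by
    refine ENNReal.toReal_mono hSfin.ne ?_
    calc μ (A ∩ (T^[n]) ⁻¹' S) ≤ μ ((T^[n]) ⁻¹' S) := measure_mono inter_subset_right
    _ = μ S := hpres_iter n S hS
  rcases Nat.lt_or_ge n n₀' with hnle | hnge
  · have hfac : 1 ≤ C * (max (n:ℝ) 1) ^ b := by
      rcases Nat.eq_zero_or_pos n with h0 | h1
      · subst h0
        simp only [Nat.cast_zero]
        rw [max_eq_right (by norm_num : (0:ℝ) ≤ 1), Real.one_rpow, mul_one]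
        exact hC1
      · have hmax : max (n:ℝ) 1 = (n:ℝ) := max_eq_left (by exact_mod_cast h1)
        rw [hmax]
        have h2 : ((n₀':ℝ))^b ≤ (n:ℝ)^b :=
          Real.rpow_le_rpow_of_nonpos (by exact_mod_cast h1) (by exact_mod_cast hnle.le) hb2.le
        have h4 : ((n₀':ℝ))^(-b) * ((n₀':ℝ))^b = 1 := by
          rw [← Real.rpow_add hn₀'pos]; simp
        calc (1:ℝ) = ((n₀':ℝ))^(-b) * ((n₀':ℝ))^b := h4.symm
        _ ≤ C * (n:ℝ)^b := by
            apply mul_le_mul (le_trans (le_max_right _ _) (le_max_left _ _)) h2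
              (Real.rpow_nonneg hn₀'pos.le b) (by linarith)
    calc (μ (A ∩ (T^[n]) ⁻¹' S)).toReal ≤ 1 * (μ S).toReal := by simpa using htriv
    _ ≤ C * (max (n:ℝ) 1) ^ b * (μ S).toReal :=
        mul_le_mul_of_nonneg_right hfac ENNReal.toReal_nonneg
  · have hn1 : 1 ≤ n := le_trans hn₀'1 hnge
    have hnn₀ : n₀ ≤ n := le_trans (le_max_left _ _) hnge
    have hmeasAS : MeasurableSet (A ∩ (T^[n])⁻¹' S) := hA.inter ((hT.iterate n) hS)
    have hEq1 : (μ (A ∩ (T^[n])⁻¹' S)).toReal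
        = ∫ x, g x * S.indicator (fun _ => (1:ℝ)) (T^[n] x) ∂μ := by
      have hfun : (fun x => g x * S.indicator (fun _ => (1:ℝ)) (T^[n] x))
          = (A ∩ (T^[n])⁻¹' S).indicator (fun _ => (1:ℝ)) := by
        funext x
        by_cases hx : x ∈ A <;> by_cases hx2 : T^[n] x ∈ S <;>
          simp [hg_def, Set.indicator_apply, hx, hx2, Set.mem_preimage]
      rw [hfun, show ((A ∩ (T^[n])⁻¹' S).indicator (fun _ => (1:ℝ)))
        = (A ∩ (T^[n])⁻¹' S).indicator 1 from rfl, integral_indicator_one hmeasAS]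
      rfl
    have hEq2 := hdual_iter n g hg_int (S.indicator (fun _ => (1:ℝ)))
      (measurable_const.indicator hS)
      ⟨1, fun x => by by_cases hx : x ∈ S <;> simp [Set.indicator_apply, hx]⟩
    have hEq3 : ∫ x, (Tdual^[n] g) x * S.indicator (fun _ => (1:ℝ)) x ∂μ
        = ∫ x in S, (Tdual^[n] g) x ∂μ := by
      rw [← integral_indicator hS]
      congr 1; funext x
      by_cases hx : x ∈ S <;> simp [Set.indicator_apply, hx]
    have hbound : ∫ x in S, (Tdual^[n] g) x ∂μ ≤ (M / bseq n) * (μ S).toReal := by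
      have hae : ∀ᵐ x ∂(μ.restrict S), (Tdual^[n] g) x ≤ M / bseq n := by
        have hN' : ∀ᵐ x ∂μ, x ∉ N := measure_eq_zero_iff_ae_notMem.mp hNnull
        filter_upwards [ae_restrict_of_ae hN', ae_restrict_mem hS] with x hxN hxS
        have := hn₀ n hnn₀ x ⟨hSA hxS, hxN⟩
        rw [le_div_iff₀ (hbpos n)]
        linarith [this]
      have hmono : ∫ x in S, (Tdual^[n] g) x ∂μ ≤ ∫ _x in S, (M / bseq n) ∂μ :=
        integral_mono_ae ((hit_int n).integrableOn)
          (integrableOn_const hSfin.ne) hae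
      have hconst : ∫ _x in S, (M / bseq n) ∂μ = (μ S).toReal * (M / bseq n) := by
        rw [setIntegral_const]; simp [Measure.real]
      rw [hconst] at hmono
      linarith [hmono]
    have h5 : M / bseq n ≤ C * (n:ℝ)^b := by
      calc M / bseq n = M * (1 / bseq n) := by ring
      _ ≤ M * (c₂ * (n:ℝ)^b) := mul_le_mul_of_nonneg_left (hc₂ n hn1) hM.le
      _ = (M * c₂) * (n:ℝ)^b := by ring
      _ ≤ C * (n:ℝ)^b := mul_le_mul_of_nonneg_right (le_max_right _ _)
          (Real.rpow_nonneg (by positivity) b)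
    have hmax : max (n:ℝ) 1 = (n:ℝ) := max_eq_left (by exact_mod_cast hn1)
    rw [hmax, hEq1, hEq2, hEq3]
    calc ∫ x in S, (Tdual^[n] g) x ∂μ ≤ (M / bseq n) * (μ S).toReal := hbound
    _ ≤ C * (n:ℝ)^b * (μ S).toReal :=
        mul_le_mul_of_nonneg_right h5 ENNReal.toReal_nonneg

private theorem stmt6_rec {E : Type*} [MeasurableSpace E] (μ : Measure E)
    (T : E → E) (hT : Measurable T)
    (A : Set E) (hA : MeasurableSet A)
    (b : ℝ)
    (C : ℝ) (hC1 : 1 ≤ C)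
    (hcore : ∀ (n : ℕ) (S : Set E), MeasurableSet S → S ⊆ A →
      (μ (A ∩ (T^[n]) ⁻¹' S)).toReal ≤ C * (max (n:ℝ) 1) ^ b * (μ S).toReal)
    (hpres_iter : ∀ (n : ℕ) (S : Set E), MeasurableSet S → μ ((T^[n]) ⁻¹' S) = μ S) :
    ∀ m : ℕ, ∀ k : ℕ → ℕ, (∀ i j, i ≤ j → k i ≤ k j) →
      (μ (⋂ j ∈ Finset.range (m+1), (T^[k j]) ⁻¹' A)).toReal
        ≤ C ^ m * (∏ j ∈ Finset.range m, (max ((k (j+1) : ℝ) - (k j : ℝ)) 1) ^ b)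
            * (μ A).toReal := by
  intro m
  induction m with
  | zero =>
    intro k _
    rw [show (⋂ j ∈ Finset.range 1, (T^[k j]) ⁻¹' A) = (T^[k 0]) ⁻¹' A by simp,
      hpres_iter _ _ hA]
    simp
  | succ m ih =>
    intro k hk
    set d := k 1 - k 0 with hddef
    set k' : ℕ → ℕ := fun j => k (j+1) - k 1 with hk'def
    have hk'mono : ∀ i j, i ≤ j → k' i ≤ k' j :=
      fun i j hij => Nat.sub_le_sub_right (hk _ _ (by omega)) _
    set B := ⋂ j ∈ Finset.range (m+1), (T^[k' j]) ⁻¹' A with hBdef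
    have hBmeas : MeasurableSet B :=
      Finset.measurableSet_biInter _ (fun j _ => (hT.iterate _) hA)
    have hBsubA : B ⊆ A := by
      intro x hx
      rw [hBdef] at hx
      simp only [Set.mem_iInter, Set.mem_preimage, Finset.mem_range] at hx
      have h0 := hx 0 (by omega)
      simpa [hk'def] using h0
    have h01 : k 0 ≤ k 1 := hk 0 1 (by omega)
    have hcompo : ∀ j x, T^[k' j] (T^[d] (T^[k 0] x)) = T^[k (j+1)] x := by
      intro j x
      rw [← Function.iterate_add_apply, ← Function.iterate_add_apply]
      congr 1
      have h1j : k 1 ≤ k (j+1) := hk 1 (j+1) (by omega)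
      have hkj : k' j = k (j+1) - k 1 := rfl
      omega
    have hsetEq : (⋂ j ∈ Finset.range (m+2), (T^[k j]) ⁻¹' A)
        = (T^[k 0]) ⁻¹' (A ∩ (T^[d]) ⁻¹' B) := by
      ext x
      simp only [Set.mem_iInter, Set.mem_preimage, Finset.mem_range, Set.mem_inter_iff, hBdef]
      constructor
      · intro h
        refine ⟨h 0 (by omega), fun j hj => ?_⟩
        rw [hcompo j x]
        exact h (j+1) (by omega)
      · rintro ⟨h0, h⟩ j hj
        match j with
        | 0 => exact h0
        | (j+1) =>
          have := h j (by omega)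
          rwa [hcompo j x] at this
    have hmeasIn : MeasurableSet (A ∩ (T^[d]) ⁻¹' B) := hA.inter ((hT.iterate d) hBmeas)
    rw [hsetEq, hpres_iter _ _ hmeasIn]
    have hcore' := hcore d B hBmeas hBsubA
    have hih := ih k' hk'mono
    have hdcast : (d:ℝ) = (k 1:ℝ) - (k 0:ℝ) := by
      rw [hddef]; push_cast [Nat.cast_sub h01]; ring
    have hP : (∏ j ∈ Finset.range (m+1), (max ((k (j+1):ℝ) - (k j:ℝ)) 1)^b)
        = (∏ j ∈ Finset.range m, (max ((k' (j+1):ℝ) - (k' j:ℝ)) 1)^b)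
          * (max ((k 1:ℝ) - (k 0:ℝ)) 1)^b := by
      rw [Finset.prod_range_succ']
      congr 1
      apply Finset.prod_congr rfl
      intro j _
      congr 2
      have h1 : k 1 ≤ k (j+1+1) := hk _ _ (by omega)
      have h2 : k 1 ≤ k (j+1) := hk _ _ (by omega)
      simp only [hk'def]
      push_cast [Nat.cast_sub h1, Nat.cast_sub h2]
      ring
    have hfacpos : (0:ℝ) ≤ (max ((d:ℝ)) 1) ^ b :=
      Real.rpow_nonneg (le_trans zero_le_one (le_max_right _ _)) b
    have hCfac : (0:ℝ) ≤ C * (max (d:ℝ) 1) ^ b :=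
      mul_nonneg (by linarith) hfacpos
    calc (μ (A ∩ (T^[d]) ⁻¹' B)).toReal
        ≤ C * (max (d:ℝ) 1) ^ b * (μ B).toReal := hcore'
    _ ≤ C * (max (d:ℝ) 1) ^ b *
        (C ^ m * (∏ j ∈ Finset.range m, (max ((k' (j+1):ℝ) - (k' j:ℝ)) 1)^b) * (μ A).toReal) :=
        mul_le_mul_of_nonneg_left hih hCfac
    _ = C ^ (m+1) * (∏ j ∈ Finset.range (m+1), (max ((k (j+1):ℝ) - (k j:ℝ)) 1)^b)
          * (μ A).toReal := by
        rw [hP, hdcast, pow_succ]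
        ring

/-- Under Assumption 1 (uniform return with rate `b_n ∈ RV_∞(1-β)`, `β ∈ (0,1)`),
for every `q ≥ 2` and `b ∈ (β-1, 0)` there is `c > 0` such that
`μ(⋂_{j=1}^q T^{-k_j} A) ≤ c (k₂-k₁)₁^b ⋯ (k_q-k_{q-1})₁^b` for all
`1 ≤ k₁ ≤ ⋯ ≤ k_q`, where `(x)₁^b = (x ∨ 1)^b`. -/
theorem stmt6 {E : Type*} [MeasurableSpace E] [TopologicalSpace E]
    (μ : Measure E) [SigmaFinite μ] (hEinf : μ Set.univ = ⊤)
    (T : E → E) (hT : Measurable T)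
    (hTpres : ∀ B : Set E, MeasurableSet B → μ (T ⁻¹' B) = μ B)
    (Tdual : (E → ℝ) → (E → ℝ))
    (hdmeas : ∀ f : E → ℝ, Measurable f → Measurable (Tdual f))
    (hdint : ∀ f : E → ℝ, Integrable f μ → Integrable (Tdual f) μ)
    (hdual : ∀ f : E → ℝ, Integrable f μ →
      ∀ g : E → ℝ, Measurable g → (∃ C : ℝ, ∀ x, |g x| ≤ C) →
      ∫ x, f x * g (T x) ∂μ = ∫ x, Tdual f x * g x ∂μ)
    (A : Set E) (hA : MeasurableSet A) (hA0 : 0 < μ A) (hAfin : μ A < ⊤)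
    (β : ℝ) (hβ0 : 0 < β) (hβ1 : β < 1)
    (bseq : ℕ → ℝ) (hbpos : ∀ n, 0 < bseq n)
    (hrv : ∀ lam : ℝ, 0 < lam →
      Tendsto (fun n : ℕ => bseq ⌊lam * (n : ℝ)⌋₊ / bseq n) atTop (𝓝 (lam ^ (1 - β))))
    (hunif : ∀ g : E → ℝ, Measurable g → (∃ C : ℝ, ∀ x, |g x| ≤ C) →
      Function.support g ⊆ A →
      μ {x ∈ A | ¬ ContinuousWithinAt g A x} = 0 →
      ∃ Nnull : Set E, μ Nnull = 0 ∧
        TendstoUniformlyOn (fun n x => bseq n * (Tdual^[n] g) x)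
          (fun _ => ∫ x, g x ∂μ) atTop (A \ Nnull)) :
    ∀ q : ℕ, 2 ≤ q → ∀ b : ℝ, β - 1 < b → b < 0 →
      ∃ c : ℝ, 0 < c ∧ ∀ k : ℕ → ℕ, (∀ i j, i ≤ j → k i ≤ k j) → 1 ≤ k 0 →
        (μ (⋂ j ∈ Finset.range q, T^[k j] ⁻¹' A)).toReal
          ≤ c * ∏ j ∈ Finset.range (q - 1),
              (max ((k (j + 1) : ℝ) - (k j : ℝ)) 1) ^ b := by
  intro q hq b hb1 hb2
  -- the test function
  set g : E → ℝ := A.indicator (fun _ => (1:ℝ)) with hg_def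
  have hg_meas : Measurable g := measurable_const.indicator hA
  have hg_bdd : ∃ C : ℝ, ∀ x, |g x| ≤ C := ⟨1, fun x => by
    by_cases hx : x ∈ A <;> simp [hg_def, Set.indicator_apply, hx]⟩
  have hg_supp : Function.support g ⊆ A := Set.support_indicator_subset
  have hg_cont : μ {x ∈ A | ¬ ContinuousWithinAt g A x} = 0 := by
    have h : {x ∈ A | ¬ ContinuousWithinAt g A x} = ∅ := by
      ext x
      simp only [mem_setOf_eq, mem_empty_iff_false, iff_false, not_and, not_not]
      intro hx
      exact continuousWithinAt_const.congr
        (fun y hy => Set.indicator_of_mem hy _) (Set.indicator_of_mem hx _)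
    rw [h, measure_empty]
  have hg_int : Integrable g μ := by
    rw [hg_def, integrable_indicator_iff hA]
    exact integrableOn_const hAfin.ne
  have hgint : ∫ x, g x ∂μ = (μ A).toReal := by
    rw [hg_def, show A.indicator (fun _ => (1:ℝ)) = A.indicator 1 from rfl,
      integral_indicator_one hA]
    rfl
  have hit_int : ∀ n, Integrable (Tdual^[n] g) μ := by
    intro n
    induction n with
    | zero => simpa using hg_int
    | succ n ih => rw [Function.iterate_succ_apply']; exact hdint _ ih
  -- uniform bound
  obtain ⟨N, hNnull, hNunif⟩ := hunif g hg_meas hg_bdd hg_supp hg_cont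
  set M : ℝ := (μ A).toReal + 1 with hMdef
  have hM : 0 < M := by
    have := ENNReal.toReal_nonneg (a := μ A); rw [hMdef]; linarith
  obtain ⟨n₀, hn₀⟩ : ∃ n₀ : ℕ, ∀ n, n₀ ≤ n → ∀ x ∈ A \ N,
      bseq n * (Tdual^[n] g) x ≤ M := by
    have h1 := (Metric.tendstoUniformlyOn_iff.mp hNunif) 1 one_pos
    obtain ⟨n₀, h⟩ := eventually_atTop.mp h1
    refine ⟨n₀, fun n hn x hx => ?_⟩
    have h2 := h n hn x hx
    simp only [Real.dist_eq, hgint] at h2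
    have h3 := abs_lt.mp h2
    rw [hMdef]
    linarith [h3.1]
  -- Potter bound
  obtain ⟨c₂, hc₂pos, hc₂⟩ := stmt6_potter β b hb1 hb2 bseq hbpos hrv
  -- iterated properties
  have hpres_iter := stmt6_pres_iter μ T hT hTpres
  have hdual_iter := stmt6_dual_iter μ T hT Tdual hdint hdual
  -- core estimate
  obtain ⟨C, hC1, hcore⟩ := stmt6_core μ T hT Tdual A hA hAfin b hb2 bseq hbpos g hg_def
    hg_int hit_int N hNnull M hM n₀ hn₀ c₂ hc₂ hpres_iter hdual_iter
  have hREC := stmt6_rec μ T hT A hA b C hC1 hcore hpres_iter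
  have hApos : 0 < (μ A).toReal := ENNReal.toReal_pos hA0.ne' hAfin.ne
  refine ⟨C ^ (q-1) * (μ A).toReal,
    mul_pos (pow_pos (lt_of_lt_of_le one_pos hC1) _) hApos, fun k hk _ => ?_⟩
  have h := hREC (q-1) k hk
  rw [show q - 1 + 1 = q by omega] at h
  calc (μ (⋂ j ∈ Finset.range q, T^[k j] ⁻¹' A)).toReal
      ≤ C ^ (q-1) * (∏ j ∈ Finset.range (q-1), (max ((k (j+1) : ℝ) - (k j : ℝ)) 1) ^ b)
        * (μ A).toReal := h
  _ = C ^ (q-1) * (μ A).toReal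
        * ∏ j ∈ Finset.range (q-1), (max ((k (j+1) : ℝ) - (k j : ℝ)) 1) ^ b := by ring
end

section
/- Let p ≥ 2 and β ∈ (0,1) with p(β-1) < -1, and fix b satisfying (β-1) ∨ (-(1/(p-1))) < b < -1/p. Let r ≥ 2, and let d₂,...,d_r ∈ {0,1,...,p}. Define L = |{2 ≤ u ≤ r : d_u < p}| + 1 and m = pL - Σ_{u=2}^r d_u 1_{d_u < p}. Then there exists c > 0 (depending only on p, r, b) such that Σ_{1 ≤ k₁ ≤ ⋯ ≤ k_r ≤ n} Π_{u=2}^r (k_u - k_{u-1})₁^{d_u b} ≤ c n^{(pb+1)L - bm} for all n ≥ 1, where (x)₁^a := (x ∨ 1)^a. -/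
open Finset

private lemma aux_step {x q : ℝ} (hx : 1 ≤ x) (hq0 : 0 < q) (hq1 : q ≤ 1) :
    q * x ^ (q - 1) ≤ x ^ q - (x - 1) ^ q := by
  have hx0 : (0 : ℝ) < x := lt_of_lt_of_le one_pos hx
  have hinv : 1 / x ≤ 1 := by rw [div_le_one hx0]; exact hx
  have hinv0 : 0 < 1 / x := by positivity
  have hxq0 : (0 : ℝ) ≤ x ^ q := Real.rpow_nonneg hx0.le q
  have hkey : (x - 1) ^ q ≤ x ^ q * (1 - q * (1 / x)) := by
    have h1 : x - 1 = x * (1 + -(1 / x)) := by field_simp; ring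
    rw [h1, Real.mul_rpow hx0.le (by linarith)]
    have hber : (1 + -(1 / x)) ^ q ≤ 1 + q * -(1 / x) :=
      rpow_one_add_le_one_add_mul_self (by linarith) hq0.le hq1
    calc x ^ q * (1 + -(1 / x)) ^ q ≤ x ^ q * (1 + q * -(1 / x)) := by
          exact mul_le_mul_of_nonneg_left hber hxq0
      _ = x ^ q * (1 - q * (1 / x)) := by ring
  have hxq : x ^ q * (1 / x) = x ^ (q - 1) := by
    rw [Real.rpow_sub hx0, Real.rpow_one]; ring
  have h2 : x ^ q * (1 - q * (1 / x)) = x ^ q - q * x ^ (q - 1) := by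
    rw [← hxq]; ring
  linarith [hkey, h2.le, h2.ge]

private lemma aux_psum {a : ℝ} (ha1 : -1 < a) (ha0 : a ≤ 0) (n : ℕ) :
    ∑ x ∈ Finset.Icc 1 n, ((x : ℝ)) ^ a ≤ (n : ℝ) ^ (a + 1) / (a + 1) := by
  have hA : (0 : ℝ) < a + 1 := by linarith
  induction n with
  | zero =>
    simp [Real.zero_rpow (ne_of_gt hA)]
  | succ n ih =>
    rw [Finset.sum_Icc_succ_top (by omega : 1 ≤ n + 1)]
    have hx : (1 : ℝ) ≤ ((n + 1 : ℕ) : ℝ) := by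
      push_cast; linarith [Nat.cast_nonneg (α := ℝ) n]
    have hstep := aux_step hx (q := a + 1) hA (by linarith)
    have he1 : a + 1 - 1 = a := by ring
    rw [he1] at hstep
    have he2 : ((n + 1 : ℕ) : ℝ) - 1 = (n : ℝ) := by push_cast; ring
    rw [he2] at hstep
    -- hstep : (a+1) * (↑(n+1)) ^ a ≤ (↑(n+1)) ^ (a+1) - (↑n) ^ (a+1)
    have hdiv : ((n + 1 : ℕ) : ℝ) ^ a ≤
        (((n + 1 : ℕ) : ℝ) ^ (a + 1) - (n : ℝ) ^ (a + 1)) / (a + 1) := by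
      rw [le_div_iff₀ hA]
      nlinarith [hstep]
    calc ∑ x ∈ Finset.Icc 1 n, ((x : ℝ)) ^ a + ((n + 1 : ℕ) : ℝ) ^ a
        ≤ (n : ℝ) ^ (a + 1) / (a + 1) +
            (((n + 1 : ℕ) : ℝ) ^ (a + 1) - (n : ℝ) ^ (a + 1)) / (a + 1) :=
          add_le_add ih hdiv
      _ = ((n + 1 : ℕ) : ℝ) ^ (a + 1) / (a + 1) := by ring

private lemma aux_A {a : ℝ} (ha1 : -1 < a) (ha0 : a ≤ 0) (n : ℕ) (hn : 1 ≤ n) :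
    ∑ x ∈ Finset.range n, (max (x : ℝ) 1) ^ a ≤ (1 + 1 / (a + 1)) * (n : ℝ) ^ (a + 1) := by
  have hA : (0 : ℝ) < a + 1 := by linarith
  have hsplit : ∑ x ∈ Finset.range n, (max (x : ℝ) 1) ^ a
      = (max ((0 : ℕ) : ℝ) 1) ^ a + ∑ x ∈ Finset.Ico 1 n, (max (x : ℝ) 1) ^ a := by
    rw [Finset.range_eq_Ico, Finset.sum_eq_sum_Ico_succ_bot (by omega : 0 < n)]
  have h0 : (max ((0 : ℕ) : ℝ) 1) ^ a = 1 := by simp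
  have hIco : ∑ x ∈ Finset.Ico 1 n, (max (x : ℝ) 1) ^ a
      = ∑ x ∈ Finset.Ico 1 n, ((x : ℝ)) ^ a := by
    refine Finset.sum_congr rfl fun x hx => ?_
    have hx1 : 1 ≤ x := (Finset.mem_Ico.mp hx).1
    have : (1 : ℝ) ≤ (x : ℝ) := by exact_mod_cast hx1
    rw [max_eq_left this]
  have hsub : ∑ x ∈ Finset.Ico 1 n, ((x : ℝ)) ^ a ≤ ∑ x ∈ Finset.Icc 1 n, ((x : ℝ)) ^ a := by
    refine Finset.sum_le_sum_of_subset_of_nonneg ?_ fun i _ _ => Real.rpow_nonneg (Nat.cast_nonneg i) a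
    intro x hx
    rw [Finset.mem_Ico] at hx; rw [Finset.mem_Icc]; omega
  have hone : (1 : ℝ) ≤ (n : ℝ) ^ (a + 1) := by
    apply Real.one_le_rpow (by exact_mod_cast hn) hA.le
  calc ∑ x ∈ Finset.range n, (max (x : ℝ) 1) ^ a
      = 1 + ∑ x ∈ Finset.Ico 1 n, ((x : ℝ)) ^ a := by rw [hsplit, h0, hIco]
    _ ≤ 1 + (n : ℝ) ^ (a + 1) / (a + 1) := by
        have := le_trans hsub (aux_psum ha1 ha0 n); linarith
    _ ≤ (n : ℝ) ^ (a + 1) + (n : ℝ) ^ (a + 1) / (a + 1) := by linarith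
    _ = (1 + 1 / (a + 1)) * (n : ℝ) ^ (a + 1) := by ring

private lemma aux_B {a : ℝ} (ha : a < -1) (n : ℕ) :
    ∑ x ∈ Finset.range n, (max (x : ℝ) 1) ^ a ≤ 1 + ∑' x : ℕ, (x : ℝ) ^ a := by
  have hsummable : Summable (fun x : ℕ => (x : ℝ) ^ a) := Real.summable_nat_rpow.mpr ha
  have htsum0 : (0 : ℝ) ≤ ∑' x : ℕ, (x : ℝ) ^ a :=
    tsum_nonneg fun x => Real.rpow_nonneg (Nat.cast_nonneg x) a
  rcases Nat.eq_zero_or_pos n with hn | hn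
  · subst hn; simp [htsum0]
    linarith
  have hsplit : ∑ x ∈ Finset.range n, (max (x : ℝ) 1) ^ a
      = (max ((0 : ℕ) : ℝ) 1) ^ a + ∑ x ∈ Finset.Ico 1 n, (max (x : ℝ) 1) ^ a := by
    rw [Finset.range_eq_Ico, Finset.sum_eq_sum_Ico_succ_bot hn]
  have h0 : (max ((0 : ℕ) : ℝ) 1) ^ a = 1 := by simp
  have hIco : ∑ x ∈ Finset.Ico 1 n, (max (x : ℝ) 1) ^ a
      = ∑ x ∈ Finset.Ico 1 n, ((x : ℝ)) ^ a := by
    refine Finset.sum_congr rfl fun x hx => ?_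
    have hx1 : 1 ≤ x := (Finset.mem_Ico.mp hx).1
    have : (1 : ℝ) ≤ (x : ℝ) := by exact_mod_cast hx1
    rw [max_eq_left this]
  have hle : ∑ x ∈ Finset.Ico 1 n, ((x : ℝ)) ^ a ≤ ∑' x : ℕ, (x : ℝ) ^ a :=
    Summable.sum_le_tsum _ (fun i _ => Real.rpow_nonneg (Nat.cast_nonneg i) a) hsummable
  rw [hsplit, h0, hIco]
  linarith

/-- The key off-diagonal sum estimate in the CLT proof:
`Σ_{1 ≤ k₁ ≤ ⋯ ≤ k_r ≤ n} Π_{u=2}^r (k_u - k_{u-1})₁^{d_u b} ≤ c n^{(pb+1)L - bm}`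
where `L = #{2 ≤ u ≤ r : d_u < p} + 1` and `m = pL - Σ_{u=2}^r d_u 1_{d_u<p}`. -/
theorem stmt7 (p r : ℕ) (hp : 2 ≤ p) (hr : 2 ≤ r) (β b : ℝ)
    (hβ0 : 0 < β) (hβ1 : β < 1) (hpβ : (p : ℝ) * (β - 1) < -1)
    (hb1 : max (β - 1) (-(1 / ((p : ℝ) - 1))) < b) (hb2 : b < -(1 / (p : ℝ)))
    (d : ℕ → ℕ) (hd : ∀ u, d u ≤ p)
    (L m : ℤ)
    (hL : L = ((Finset.Icc 2 r).filter (fun u => d u < p)).card + 1)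
    (hm : m = (p : ℤ) * L - ∑ u ∈ (Finset.Icc 2 r).filter (fun u => d u < p), (d u : ℤ)) :
    ∃ c : ℝ, 0 < c ∧ ∀ n : ℕ, 1 ≤ n →
      ∑ k ∈ (Fintype.piFinset (fun _ : Fin r => Finset.Icc 1 n)).filter
          (fun k : Fin r → ℕ => ∀ i j : Fin r, i ≤ j → k i ≤ k j),
        ∏ j ∈ (Finset.range (r - 1)).attach,
          (max ((k ⟨j.1 + 1, by have := Finset.mem_range.mp j.2; omega⟩ : ℝ)
              - (k ⟨j.1, by have := Finset.mem_range.mp j.2; omega⟩ : ℝ)) 1)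
            ^ ((d (j.1 + 2) : ℝ) * b)
      ≤ c * (n : ℝ) ^ ((((p : ℝ) * b + 1) * (L : ℝ)) - b * (m : ℝ)) := by
  have hp0 : (0 : ℝ) < (p : ℝ) := by positivity
  have hp1 : (0 : ℝ) < (p : ℝ) - 1 := by
    have : (2 : ℝ) ≤ (p : ℝ) := by exact_mod_cast hp
    linarith
  have hb0 : b < 0 := by
    have h1 : (0 : ℝ) < 1 / (p : ℝ) := by positivity
    linarith [hb2]
  have hbgt : -(1 / ((p : ℝ) - 1)) < b := lt_of_le_of_lt (le_max_right _ _) hb1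
  -- exponent function
  set E : ℕ → ℝ := fun i => if d (i + 2) < p then 1 + (d (i + 2) : ℝ) * b else 0 with hE
  -- per-index bounds
  have key : ∀ i : ℕ, ∃ c : ℝ, 0 < c ∧ ∀ n : ℕ, 1 ≤ n →
      ∑ x ∈ Finset.range n, (max (x : ℝ) 1) ^ ((d (i + 2) : ℝ) * b)
        ≤ c * (n : ℝ) ^ (E i) := by
    intro i
    by_cases hcase : d (i + 2) < p
    · -- exponent in (-1, 0]
      set a : ℝ := (d (i + 2) : ℝ) * b with ha
      have ha0 : a ≤ 0 := mul_nonpos_of_nonneg_of_nonpos (Nat.cast_nonneg _) hb0.le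
      have ha1 : -1 < a := by
        rcases Nat.eq_zero_or_pos (d (i + 2)) with h0 | h0
        · rw [ha, h0]; norm_num
        · have hdle : ((d (i + 2) : ℝ)) ≤ (p : ℝ) - 1 := by
            have : (d (i + 2) : ℕ) ≤ p - 1 := by omega
            have h' : ((d (i + 2) : ℕ) : ℝ) ≤ ((p - 1 : ℕ) : ℝ) := by exact_mod_cast this
            have : ((p - 1 : ℕ) : ℝ) = (p : ℝ) - 1 := by
              have : (1 : ℕ) ≤ p := by omega
              push_cast [this]; ring
            linarith
          have h1 : ((p : ℝ) - 1) * b ≤ a := by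
            rw [ha]
            exact mul_le_mul_of_nonpos_right hdle hb0.le
          have h2 : -1 < ((p : ℝ) - 1) * b := by
            have := mul_lt_mul_of_pos_left hbgt hp1
            have he : ((p : ℝ) - 1) * -(1 / ((p : ℝ) - 1)) = -1 := by
              field_simp
            linarith
          linarith
      have hc0 : (0 : ℝ) < 1 + 1 / (a + 1) := by
        have h : (0 : ℝ) < a + 1 := by linarith
        have := div_pos one_pos h
        linarith
      refine ⟨1 + 1 / (a + 1), hc0, fun n hn => ?_⟩
      have hEi : E i = a + 1 := by simp [hE, hcase, ha]; ring
      rw [hEi]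
      exact aux_A ha1 ha0 n hn
    · have hdp : d (i + 2) = p := le_antisymm (hd _) (not_lt.mp hcase)
      have ha : (d (i + 2) : ℝ) * b < -1 := by
        rw [hdp]
        have := mul_lt_mul_of_pos_left hb2 hp0
        have he : (p : ℝ) * -(1 / (p : ℝ)) = -1 := by field_simp
        linarith
      have htsum0 : (0 : ℝ) ≤ ∑' x : ℕ, (x : ℝ) ^ ((d (i + 2) : ℝ) * b) :=
        tsum_nonneg fun x => Real.rpow_nonneg (Nat.cast_nonneg x) _
      refine ⟨1 + ∑' x : ℕ, (x : ℝ) ^ ((d (i + 2) : ℝ) * b), by linarith, fun n hn => ?_⟩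
      have hEi : E i = 0 := by simp [hE, hcase]
      rw [hEi, Real.rpow_zero, mul_one]
      exact aux_B ha n
  choose c hcpos hcb using key
  refine ⟨∏ i ∈ Finset.range (r - 1), c i,
    Finset.prod_pos (fun i _ => hcpos i), fun n hn => ?_⟩
  have hn1 : (1 : ℝ) ≤ (n : ℝ) := by exact_mod_cast hn
  have hn0 : (0 : ℝ) < (n : ℝ) := by linarith
  -- the injection into (first value, gaps)
  set e : (Fin r → ℕ) → ℕ × (Fin (r - 1) → ℕ) := fun k =>
    (k ⟨0, by omega⟩, fun j => k ⟨j.1 + 1, by have := j.2; omega⟩ - k ⟨j.1, by have := j.2; omega⟩)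
    with he
  set G : ℕ × (Fin (r - 1) → ℕ) → ℝ := fun q =>
    ∏ j : Fin (r - 1), (max ((q.2 j : ℕ) : ℝ) 1) ^ ((d (j.1 + 2) : ℝ) * b) with hG
  set s := (Fintype.piFinset (fun _ : Fin r => Finset.Icc 1 n)).filter
      (fun k : Fin r → ℕ => ∀ i j : Fin r, i ≤ j → k i ≤ k j) with hs
  set T := (Finset.Icc 1 n) ×ˢ (Fintype.piFinset (fun _ : Fin (r - 1) => Finset.range n)) with hT
  have hGnonneg : ∀ q, 0 ≤ G q := by
    intro q
    exact Finset.prod_nonneg fun j _ => Real.rpow_nonneg (le_trans zero_le_one (le_max_right _ _)) _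
  -- Step 1: the summand equals G (e k) for monotone k
  have hFG : ∀ k ∈ s,
      (∏ j ∈ (Finset.range (r - 1)).attach,
          (max ((k ⟨j.1 + 1, by have := Finset.mem_range.mp j.2; omega⟩ : ℝ)
              - (k ⟨j.1, by have := Finset.mem_range.mp j.2; omega⟩ : ℝ)) 1)
            ^ ((d (j.1 + 2) : ℝ) * b)) = G (e k) := by
    intro k hk
    have hmono := (Finset.mem_filter.mp hk).2
    rw [hG]
    refine Finset.prod_bij
      (fun (j : {x // x ∈ Finset.range (r - 1)}) _ =>
        (⟨j.1, Finset.mem_range.mp j.2⟩ : Fin (r - 1))) ?_ ?_ ?_ ?_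
    · intro a _; exact Finset.mem_univ _
    · intro a _ a' _ hab
      have : a.1 = a'.1 := congrArg Fin.val hab
      exact Subtype.ext this
    · intro j _
      exact ⟨⟨j.1, Finset.mem_range.mpr j.2⟩, Finset.mem_attach _ _, rfl⟩
    · intro a _
      have h1 : a.1 < r - 1 := Finset.mem_range.mp a.2
      have hle : k ⟨a.1, by omega⟩ ≤ k ⟨a.1 + 1, by omega⟩ :=
        hmono _ _ (by simp [Fin.mk_le_mk])
      simp only [he]
      rw [Nat.cast_sub hle]
  -- Step 2: injectivity of e on s
  have hinj : ∀ x ∈ s, ∀ y ∈ s, e x = e y → x = y := by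
    intro x hx y hy hxy
    have hxm := (Finset.mem_filter.mp hx).2
    have hym := (Finset.mem_filter.mp hy).2
    have h0 : x ⟨0, by omega⟩ = y ⟨0, by omega⟩ := congrArg Prod.fst hxy
    have hgap : ∀ j : Fin (r - 1),
        x ⟨j.1 + 1, by have := j.2; omega⟩ - x ⟨j.1, by have := j.2; omega⟩
          = y ⟨j.1 + 1, by have := j.2; omega⟩ - y ⟨j.1, by have := j.2; omega⟩ :=
      fun j => congrFun (congrArg Prod.snd hxy) j
    have hall : ∀ t : ℕ, ∀ ht : t < r, x ⟨t, ht⟩ = y ⟨t, ht⟩ := by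
      intro t
      induction t with
      | zero => intro ht; exact h0
      | succ t ih =>
        intro ht
        have ht' : t < r - 1 := by omega
        have hgj := hgap ⟨t, ht'⟩
        simp only [Fin.val_mk] at hgj
        have hlx : x ⟨t, by omega⟩ ≤ x ⟨t + 1, by omega⟩ :=
          hxm _ _ (by simp [Fin.mk_le_mk])
        have hly : y ⟨t, by omega⟩ ≤ y ⟨t + 1, by omega⟩ :=
          hym _ _ (by simp [Fin.mk_le_mk])
        have hih := ih (by omega)
        omega
    funext i
    have := hall i.1 i.2
    simpa using this
  -- Step 3: the image lies in T
  have himg : s.image e ⊆ T := by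
    intro q hq
    rw [Finset.mem_image] at hq
    obtain ⟨k, hk, rfl⟩ := hq
    have hmem := (Finset.mem_filter.mp hk).1
    rw [Fintype.mem_piFinset] at hmem
    rw [hT, Finset.mem_product]
    constructor
    · exact hmem _
    · rw [Fintype.mem_piFinset]
      intro j
      rw [Finset.mem_range]
      have h1 := Finset.mem_Icc.mp (hmem ⟨j.1 + 1, by have := j.2; omega⟩)
      have h2 := Finset.mem_Icc.mp (hmem ⟨j.1, by have := j.2; omega⟩)
      simp only [he]
      omega
  -- Step 4: main chain of inequalities
  calc ∑ k ∈ s, ∏ j ∈ (Finset.range (r - 1)).attach,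
        (max ((k ⟨j.1 + 1, by have := Finset.mem_range.mp j.2; omega⟩ : ℝ)
            - (k ⟨j.1, by have := Finset.mem_range.mp j.2; omega⟩ : ℝ)) 1)
          ^ ((d (j.1 + 2) : ℝ) * b)
      = ∑ k ∈ s, G (e k) := Finset.sum_congr rfl hFG
    _ = ∑ q ∈ s.image e, G q := (Finset.sum_image hinj).symm
    _ ≤ ∑ q ∈ T, G q :=
        Finset.sum_le_sum_of_subset_of_nonneg himg fun q _ _ => hGnonneg q
    _ = (n : ℝ) * ∏ j : Fin (r - 1),
          ∑ x ∈ Finset.range n, (max (x : ℝ) 1) ^ ((d (j.1 + 2) : ℝ) * b) := by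
        rw [hT, Finset.sum_product]
        have hinner : ∀ x ∈ Finset.Icc 1 n,
            (∑ y ∈ Fintype.piFinset (fun _ : Fin (r - 1) => Finset.range n), G (x, y))
            = ∏ j : Fin (r - 1),
                ∑ z ∈ Finset.range n, (max (z : ℝ) 1) ^ ((d (j.1 + 2) : ℝ) * b) := by
          intro x _
          have hdef : ∀ y : Fin (r - 1) → ℕ, G (x, y)
              = ∏ j : Fin (r - 1), (max ((y j : ℕ) : ℝ) 1) ^ ((d (j.1 + 2) : ℝ) * b) :=
            fun _ => rfl
          simp only [hdef]
          exact (Finset.prod_univ_sum (fun _ : Fin (r - 1) => Finset.range n)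
            (fun j z => (max (z : ℝ) 1) ^ ((d (j.1 + 2) : ℝ) * b))).symm
        rw [Finset.sum_congr rfl hinner, Finset.sum_const, Nat.card_Icc]
        simp only [Nat.add_sub_cancel, nsmul_eq_mul]
    _ ≤ (n : ℝ) * ∏ j : Fin (r - 1), (c j.1 * (n : ℝ) ^ (E j.1)) := by
        apply mul_le_mul_of_nonneg_left _ hn0.le
        apply Finset.prod_le_prod
        · intro j _
          exact Finset.sum_nonneg fun x _ =>
            Real.rpow_nonneg (le_trans zero_le_one (le_max_right _ _)) _
        · intro j _
          exact hcb j.1 n hn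
    _ = (∏ i ∈ Finset.range (r - 1), c i) * (n : ℝ)
          ^ ((((p : ℝ) * b + 1) * (L : ℝ)) - b * (m : ℝ)) := by
        rw [Finset.prod_mul_distrib]
        rw [← Real.rpow_sum_of_pos hn0 (fun j : Fin (r - 1) => E j.1) Finset.univ]
        have hc : ∏ j : Fin (r - 1), c j.1 = ∏ i ∈ Finset.range (r - 1), c i :=
          Fin.prod_univ_eq_prod_range c (r - 1)
        have hEs : ∑ j : Fin (r - 1), E j.1 = ∑ i ∈ Finset.range (r - 1), E i :=
          Fin.sum_univ_eq_sum_range E (r - 1)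
        rw [hc, hEs]
        -- exponent identity
        have hexp : 1 + ∑ i ∈ Finset.range (r - 1), E i
            = (((p : ℝ) * b + 1) * (L : ℝ)) - b * (m : ℝ) := by
          have hre : ∑ i ∈ Finset.range (r - 1), E i
              = ∑ u ∈ Finset.Icc 2 r, (if d u < p then 1 + (d u : ℝ) * b else 0) := by
            have h1 : Finset.Icc 2 r = Finset.Ico 2 (r + 1) := by
              rw [Finset.Ico_add_one_right_eq_Icc]
            rw [h1, Finset.sum_Ico_eq_sum_range]
            have h2 : r + 1 - 2 = r - 1 := by omega
            rw [h2]
            refine Finset.sum_congr rfl fun i _ => ?_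
            simp [hE, Nat.add_comm 2 i]
          have hfil : ∑ u ∈ Finset.Icc 2 r, (if d u < p then 1 + (d u : ℝ) * b else 0)
              = ∑ u ∈ (Finset.Icc 2 r).filter (fun u => d u < p), (1 + (d u : ℝ) * b) :=
            (Finset.sum_filter _ _).symm
          set C : ℝ := (((Finset.Icc 2 r).filter (fun u => d u < p)).card : ℝ) with hC
          set S : ℝ := ∑ u ∈ (Finset.Icc 2 r).filter (fun u => d u < p), ((d u : ℕ) : ℝ)
            with hS
          have hfil2 : ∑ u ∈ (Finset.Icc 2 r).filter (fun u => d u < p),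
              (1 + (d u : ℝ) * b) = C + S * b := by
            rw [Finset.sum_add_distrib, Finset.sum_const, hC, hS, nsmul_eq_mul, mul_one,
              ← Finset.sum_mul]
          have hLr : (L : ℝ) = C + 1 := by
            rw [hL]; push_cast; ring
          have hmr : (m : ℝ) = (p : ℝ) * (L : ℝ) - S := by
            rw [hm]; push_cast [hS]; ring
          rw [hre, hfil, hfil2, hLr, hmr, hLr]
          ring
        rw [← hexp, Real.rpow_add hn0, Real.rpow_one]
        ring
end
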